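/- Let G be an m×n real matrix and S a subspace of n×m real matrices such that I - GK is invertible for all K ∈ S. Then the following are equivalent: (i) KGK ∈ S for all K ∈ S; (ii) h_G(S) = S, where h_G(K) = -K(I-GK)⁻¹. -/

import Mathlib

open Matrix Polynomial

attribute [local instance] Matrix.normedAddCommGroup Matrix.normedSpace

theorem stmt_19 {m n : ℕ} (G : Matrix (Fin m) (Fin n) ℝ)
    (S : Submodule ℝ (Matrix (Fin n) (Fin m) ℝ))
    (hinv : ∀ K ∈ S, IsUnit (1 - G * K)) :
    (∀ K ∈ S, K * G * K ∈ S) ↔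
      (fun K : Matrix (Fin n) (Fin m) ℝ => -(K * (1 - G * K)⁻¹)) '' (S : Set (Matrix (Fin n) (Fin m) ℝ)) =
        (S : Set (Matrix (Fin n) (Fin m) ℝ)) := by
  constructor
  · intro hQI
    -- key : h maps S into S
    have key : ∀ K ∈ S, -(K * (1 - G * K)⁻¹) ∈ S := by
      intro K hK
      -- Step A : K (GK)^p ∈ S for all p
      have hA : ∀ p : ℕ, K * (G * K) ^ p ∈ S := by
        intro p
        induction p with
        | zero => simpa using hK
        | succ p ih =>
          set A := K * (G * K) ^ p with hAdef
          have h1 := hQI _ (S.add_mem ih hK)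
          have h2 := hQI _ ih
          have h3 := hQI _ hK
          have e1 : A * G * K = K * (G * K) ^ (p + 1) := by
            rw [hAdef, pow_succ]
            simp only [Matrix.mul_assoc]
          have e2 : K * G * A = K * (G * K) ^ (p + 1) := by
            rw [hAdef, pow_succ']
            simp only [Matrix.mul_assoc]
          have expand : (A + K) * G * (A + K)
              = A * G * A + (A * G * K + (K * G * A + K * G * K)) := by
            rw [Matrix.add_mul, Matrix.add_mul, Matrix.mul_add, Matrix.mul_add]
            abel
          have h4 : (A + K) * G * (A + K) - A * G * A - K * G * K
              = (2 : ℝ) • (K * (G * K) ^ (p + 1)) := by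
            rw [expand, e1, e2, two_smul]
            abel
          have h6 : (2 : ℝ) • (K * (G * K) ^ (p + 1)) ∈ S := by
            rw [← h4]; exact S.sub_mem (S.sub_mem h1 h2) h3
          have := S.smul_mem ((2 : ℝ)⁻¹) h6
          rwa [smul_smul, inv_mul_cancel₀ (two_ne_zero), one_smul] at this
      -- Step B : K * q(GK) ∈ S for any polynomial q
      have hB : ∀ q : ℝ[X], K * (aeval (G * K) q) ∈ S := by
        intro q
        induction q using Polynomial.induction_on' with
        | add p q hp hq => rw [_root_.map_add, Matrix.mul_add]; exact S.add_mem hp hq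
        | monomial p a =>
          rw [aeval_monomial, Algebra.algebraMap_eq_smul_one, Matrix.smul_mul,
            Matrix.one_mul, Matrix.mul_smul]
          exact S.smul_mem a (hA p)
      -- Cayley-Hamilton : B⁻¹ is a polynomial in B
      set B := 1 - G * K with hBdef
      have hU : IsUnit B := hinv K hK
      have hUdet : IsUnit B.det := (Matrix.isUnit_iff_isUnit_det B).mp hU
      have hdet_ne : B.det ≠ 0 := hUdet.ne_zero
      have hc0 : B.charpoly.coeff 0 ≠ 0 := by
        intro h
        apply hdet_ne
        rw [Matrix.det_eq_sign_charpoly_coeff, h, mul_zero]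
      have hCH : B * aeval B B.charpoly.divX = -B.charpoly.coeff 0 • 1 := by
        have h1 : aeval B (X * B.charpoly.divX + C (B.charpoly.coeff 0)) = 0 := by
          rw [X_mul_divX_add]; exact Matrix.aeval_self_charpoly B
        rw [_root_.map_add, _root_.map_mul, aeval_X, aeval_C,
          Algebra.algebraMap_eq_smul_one, add_eq_zero_iff_eq_neg] at h1
        rw [h1, neg_smul]
      have hBinv : B⁻¹ = (-B.charpoly.coeff 0)⁻¹ • aeval B B.charpoly.divX := by
        apply Matrix.inv_eq_right_inv
        rw [mul_smul_comm, hCH, smul_smul, inv_mul_cancel₀ (neg_ne_zero.mpr hc0), one_smul]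
      have haev : aeval (G * K) (B.charpoly.divX.comp (1 - X)) = aeval B B.charpoly.divX := by
        rw [aeval_comp]
        congr 1
        rw [_root_.map_sub, aeval_X, _root_.map_one, hBdef]
      apply S.neg_mem
      rw [hBinv, ← haev, Matrix.mul_smul]
      exact S.smul_mem _ (hB _)
    apply Set.Subset.antisymm
    · rintro x ⟨K, hK, rfl⟩
      exact key K hK
    · -- involution : every K ∈ S equals h (h K) with h K ∈ S
      intro K hK
      set B := 1 - G * K with hBdef
      have hU : IsUnit B := hinv K hK
      have hUdet : IsUnit B.det := (Matrix.isUnit_iff_isUnit_det B).mp hU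
      refine ⟨-(K * B⁻¹), key K hK, ?_⟩
      have h1 : 1 - G * -(K * B⁻¹) = B⁻¹ := by
        rw [Matrix.mul_neg, sub_neg_eq_add, ← Matrix.mul_assoc]
        nth_rewrite 1 [← Matrix.mul_nonsing_inv B hUdet]
        rw [← Matrix.add_mul, hBdef, sub_add_cancel, Matrix.one_mul]
      show -(-(K * B⁻¹) * (1 - G * -(K * B⁻¹))⁻¹) = K
      rw [h1, Matrix.nonsing_inv_nonsing_inv B hUdet, Matrix.neg_mul, neg_neg,
        Matrix.mul_assoc, Matrix.nonsing_inv_mul B hUdet, Matrix.mul_one]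
  · intro hS K hK
    -- for t ≠ 0, KGK * (1 - t(GK))⁻¹ ∈ S
    have hmem : ∀ t : ℝ, t ≠ 0 → K * G * K * (1 - t • (G * K))⁻¹ ∈ S := by
      intro t ht
      have htK : t • K ∈ S := S.smul_mem t hK
      have hh : -((t • K) * (1 - G * (t • K))⁻¹) ∈ (S : Set (Matrix (Fin n) (Fin m) ℝ)) := by
        rw [← hS]; exact Set.mem_image_of_mem _ htK
      have hGsmul : G * (t • K) = t • (G * K) := by rw [Matrix.mul_smul]
      rw [hGsmul] at hh
      set Bt := 1 - t • (G * K) with hBtdef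
      have hU : IsUnit Bt := by
        have := hinv (t • K) htK
        rwa [hGsmul] at this
      have hUdet : IsUnit Bt.det := (Matrix.isUnit_iff_isUnit_det Bt).mp hU
      have hu : t • K * Bt⁻¹ ∈ S := by
        have := S.neg_mem hh
        simpa using this
      have e1 : (t • K) * Bt = t • K - t ^ 2 • (K * G * K) := by
        rw [hBtdef, Matrix.mul_sub, Matrix.mul_one]
        congr 1
        rw [Matrix.mul_smul, Matrix.smul_mul, smul_smul, pow_two, Matrix.mul_assoc]
      have h : t • K = t • K * Bt⁻¹ - t ^ 2 • (K * G * K * Bt⁻¹) := by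
        have h' : (t • K) * Bt * Bt⁻¹ = (t • K - t ^ 2 • (K * G * K)) * Bt⁻¹ := by rw [e1]
        rw [Matrix.mul_assoc, Matrix.mul_nonsing_inv Bt hUdet, Matrix.mul_one,
          Matrix.sub_mul] at h'
        simp only [Matrix.smul_mul] at h' ⊢
        exact h'
      have hdiff : t • K - t • K * Bt⁻¹ ∈ S := S.sub_mem htK hu
      have he : t • K - t • K * Bt⁻¹ = -(t ^ 2 • (K * G * K * Bt⁻¹)) := by
        nth_rewrite 1 [h]
        abel
      rw [he] at hdiff
      have := S.smul_mem ((t ^ 2)⁻¹) (S.neg_mem hdiff)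
      rwa [neg_neg, smul_smul, inv_mul_cancel₀ (pow_ne_zero 2 ht), one_smul] at this
    -- take the limit t → 0
    have hclosed : IsClosed (S : Set (Matrix (Fin n) (Fin m) ℝ)) :=
      Submodule.closed_of_finiteDimensional S
    have hinvAt : ContinuousAt (fun t : ℝ => (1 - t • (G * K))⁻¹) 0 := by
      have h2 : ContinuousAt Inv.inv (1 : Matrix (Fin m) (Fin m) ℝ) := by
        apply continuousAt_matrix_inv
        rw [det_one, Ring.inverse_eq_inv']
        exact continuousAt_inv₀ one_ne_zero
      have h3 : ContinuousAt (fun t : ℝ => 1 - t • (G * K)) 0 :=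
        (continuousAt_const.sub (continuousAt_id.smul continuousAt_const))
      have h4 : ContinuousAt (Inv.inv ∘ fun t : ℝ => 1 - t • (G * K)) 0 :=
        ContinuousAt.comp (by simpa using h2) h3
      exact h4
    have hcont : ContinuousAt (fun t : ℝ => K * G * K * (1 - t • (G * K))⁻¹) 0 :=
      ((continuous_const.matrix_mul continuous_id).continuousAt).comp hinvAt
    have htend : Filter.Tendsto (fun t : ℝ => K * G * K * (1 - t • (G * K))⁻¹)
        (nhdsWithin 0 {(0 : ℝ)}ᶜ) (nhds (K * G * K)) := by
      have h5 := (hcont.continuousWithinAt (s := {(0 : ℝ)}ᶜ))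
      have h6 : K * G * K * (1 - (0 : ℝ) • (G * K))⁻¹ = K * G * K := by simp
      rw [ContinuousWithinAt] at h5
      simp only [h6] at h5
      exact h5
    exact hclosed.mem_of_tendsto htend
      (Filter.eventually_iff_exists_mem.mpr ⟨{(0 : ℝ)}ᶜ, self_mem_nhdsWithin,
        fun t htne => hmem t htne⟩)
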